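/- Let G be a graph, let P be a longest path in G with fixed endpoint v_0, and let End(v_0) be the set of endpoints (other than v_0) of all paths obtainable from P by sequences of Pósa rotations fixing v_0. Then |N_G(End(v_0))| < 2|End(v_0)|, where N_G(S) denotes the external neighbourhood of S. -/

import Mathlib

open SimpleGraph

/-- `q` is obtained from the path `p` (from `v₀` to `w`) by a single Pósa rotation:
for some `i < length p - 1` with `v_i` adjacent to `w`, `q` is the path
`v₀,…,v_i,w,…,v_{i+1}` ending at `v_{i+1}`. -/
def IsPosaRotation {V : Type*} (G : SimpleGraph V) {v0 w y : V}
    (p : G.Walk v0 w) (q : G.Walk v0 y) : Prop :=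
  ∃ i : ℕ, i + 1 < p.length ∧ G.Adj (p.getVert i) w ∧ y = p.getVert (i + 1) ∧
    q.support = p.support.take (i + 1) ++ (p.support.drop (i + 1)).reverse

/-- The paths obtainable from `p0` by a sequence of Pósa rotations fixing `v₀`. -/
inductive PosaReachable {V : Type*} (G : SimpleGraph V) {v0 w0 : V} (p0 : G.Walk v0 w0) :
    ∀ {w : V}, G.Walk v0 w → Prop
  | base : PosaReachable G p0 p0
  | rot {w y : V} (p : G.Walk v0 w) (q : G.Walk v0 y) :
      PosaReachable G p0 p → IsPosaRotation G p q → PosaReachable G p0 q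

/-- `End(v₀)`: the set of endpoints other than `v₀` of paths obtainable from `p0` by
sequences of Pósa rotations with fixed endpoint `v₀`. -/
def posaEnd {V : Type*} (G : SimpleGraph V) {v0 w0 : V} (p0 : G.Walk v0 w0) : Set V :=
  {y | y ≠ v0 ∧ ∃ q : G.Walk v0 y, PosaReachable G p0 q}

/-- The external neighbourhood `N_G(S) = {u ∉ S : u has a neighbour in S}`. -/
def extNbhd {V : Type*} (G : SimpleGraph V) (S : Set V) : Set V :=
  {u | u ∉ S ∧ ∃ s ∈ S, G.Adj s u}

namespace PosaAux
variable {V : Type*}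
def zipE : List V → List (Sym2 V)
  | [] => []
  | [_] => []
  | a :: b :: l => s(a, b) :: zipE (b :: l)
@[simp] lemma zipE_nil : zipE ([] : List V) = [] := rfl
@[simp] lemma zipE_single (a : V) : zipE [a] = [] := rfl
@[simp] lemma zipE_cons_cons (a b : V) (l : List V) :
    zipE (a :: b :: l) = s(a, b) :: zipE (b :: l) := rfl

lemma mem_zipE {l : List V} {e : Sym2 V} :
    e ∈ zipE l ↔ ∃ a b, [a, b] <:+: l ∧ e = s(a, b) := by
  induction l with
  | nil => simp [List.infix_nil]
  | cons x l ih =>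
    cases l with
    | nil =>
      simp only [zipE_single, List.mem_nil_iff, false_iff]
      rintro ⟨a, b, hinf, rfl⟩
      have := hinf.length_le
      simp at this
    | cons y l =>
      simp only [zipE_cons_cons, List.mem_cons, ih]
      constructor
      · rintro (rfl | ⟨a, b, hinf, rfl⟩)
        · exact ⟨x, y, ⟨[], l, by simp⟩, rfl⟩
        · exact ⟨a, b, List.infix_cons hinf, rfl⟩
      · rintro ⟨a, b, hinf, rfl⟩
        rcases List.infix_cons_iff.1 hinf with hpre | hinf'
        · rcases List.cons_prefix_cons.1 hpre with ⟨rfl, h2⟩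
          rcases List.cons_prefix_cons.1 h2 with ⟨rfl, _⟩
          exact Or.inl rfl
        · exact Or.inr ⟨a, b, hinf', rfl⟩

lemma pair_infix_iff {l : List V} {a b : V} :
    [a, b] <:+: l ↔ ∃ n, l[n]? = some a ∧ l[n + 1]? = some b := by
  constructor
  · rintro ⟨s, t, rfl⟩
    refine ⟨s.length, ?_, ?_⟩
    · rw [List.append_assoc, List.getElem?_append_right le_rfl]
      simp
    · rw [List.append_assoc, List.getElem?_append_right (Nat.le_succ _)]
      simp
  · rintro ⟨n, ha, hb⟩
    have hn1 : n + 1 < l.length := (List.getElem?_eq_some_iff.1 hb).1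
    have hn : n < l.length := by omega
    have h1 : l[n] = a := by
      have := List.getElem?_eq_getElem hn
      rw [ha] at this; exact (Option.some_injective _ this.symm)
    have h2 : l[n+1] = b := by
      have := List.getElem?_eq_getElem hn1
      rw [hb] at this; exact (Option.some_injective _ this.symm)
    refine ⟨l.take n, l.drop (n + 2), ?_⟩
    rw [← h1, ← h2]
    have e1 := List.drop_eq_getElem_cons hn
    have e2 := List.drop_eq_getElem_cons hn1
    rw [e2] at e1
    rw [show List.take n l ++ [l[n], l[n+1]] ++ l.drop (n+2) = List.take n l ++ (l[n] :: l[n+1] :: l.drop (n+2)) by simp, ← e1, List.take_append_drop]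

lemma mem_zipE_reverse {l : List V} {e : Sym2 V} :
    e ∈ zipE l.reverse ↔ e ∈ zipE l := by
  simp only [mem_zipE]
  constructor
  · rintro ⟨a, b, hinf, rfl⟩
    refine ⟨b, a, ?_, Sym2.eq_swap⟩
    rw [← List.reverse_infix, ← List.reverse_reverse l]
    simpa using hinf
  · rintro ⟨a, b, hinf, rfl⟩
    refine ⟨b, a, ?_, Sym2.eq_swap⟩
    rw [show [b, a] = [a, b].reverse by simp, List.reverse_infix]
    exact hinf

lemma zipE_append (l₁ : List V) (a : V) (l₂ : List V) :
    zipE (l₁ ++ a :: l₂) = zipE (l₁ ++ [a]) ++ zipE (a :: l₂) := by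
  induction l₁ with
  | nil => simp
  | cons x l ih =>
    cases l with
    | nil => simp
    | cons y l =>
      have : (x :: y :: l) ++ a :: l₂ = x :: ((y :: l) ++ a :: l₂) := by simp
      rw [this, show (y :: l) ++ a :: l₂ = y :: (l ++ a :: l₂) by simp, zipE_cons_cons,
        show y :: (l ++ a :: l₂) = (y :: l) ++ a :: l₂ by simp, ih]
      simp

lemma zipE_concat (l : List V) (hl : l ≠ []) (a : V) :
    zipE (l ++ [a]) = zipE l ++ [s(l.getLast hl, a)] := by
  induction l with
  | nil => simp at hl
  | cons x l ih =>
    cases l with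
    | nil => simp
    | cons y l =>
      rw [show (x :: y :: l) ++ [a] = x :: (y :: (l ++ [a])) by simp, zipE_cons_cons,
        show y :: (l ++ [a]) = (y :: l) ++ [a] by simp, ih (by simp), zipE_cons_cons]
      simp [List.getLast_cons]

lemma zipE_split (A B : List V) (hA : A ≠ []) (hB : B ≠ []) :
    zipE (A ++ B) = zipE A ++ s(A.getLast hA, B.head hB) :: zipE B := by
  obtain ⟨b, B, rfl⟩ : ∃ b B', B = b :: B' := ⟨B.head hB, B.tail, (List.cons_head_tail hB).symm⟩
  rw [zipE_append, zipE_concat A hA]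
  simp

variable {G : SimpleGraph V}

lemma edges_eq_zipE {u v : V} (p : G.Walk u v) : p.edges = zipE p.support := by
  induction p with
  | nil => rfl
  | cons h p ih =>
    rw [Walk.edges_cons, Walk.support_cons, ih, p.support_eq_cons, zipE_cons_cons,
      ← p.support_eq_cons]

lemma support_getElem? {u v : V} (p : G.Walk u v) {i : ℕ} (hi : i ≤ p.length) :
    p.support[i]? = some (p.getVert i) := by
  induction p generalizing i with
  | nil =>
    simp only [Walk.length_nil, Nat.le_zero] at hi
    subst hi; simp [Walk.getVert]
  | cons h p ih =>
    cases i with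
    | zero => simp [Walk.getVert]
    | succ n =>
      rw [Walk.support_cons, List.getElem?_cons_succ, Walk.getVert_cons_succ]
      exact ih (by simpa [Walk.length_cons, Nat.succ_le_succ_iff] using hi)

lemma getVert_injOn {u v : V} {p : G.Walk u v} (hp : p.IsPath) {i j : ℕ}
    (hi : i ≤ p.length) (hj : j ≤ p.length) (h : p.getVert i = p.getVert j) : i = j := by
  have h1 := support_getElem? p hi
  have h2 := support_getElem? p hj
  refine (List.getElem?_inj (l := p.support) ?_ (hp.support_nodup)).1 ?_
  · rw [Walk.length_support]; omega
  · rw [h1, h2, h]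

lemma isPath_concat {u v w : V} {p : G.Walk u v} (hp : p.IsPath) (h : G.Adj v w)
    (hw : w ∉ p.support) : (p.concat h).IsPath := by
  rw [Walk.isPath_def, Walk.support_concat, List.nodup_append]
  exact ⟨hp.support_nodup, List.nodup_singleton w, by simpa [List.disjoint_singleton] using fun a (ha : a ∈ p.support) (haw : a = w) => hw (haw ▸ ha)⟩

lemma support_takeUntil_eq [DecidableEq V] {u v : V} {p : G.Walk u v} (hp : p.IsPath) {j : ℕ}
    (hj : j ≤ p.length) (h : p.getVert j ∈ p.support) :
    (p.takeUntil _ h).support = p.support.take (j + 1) := by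
  have hspec := p.take_spec h
  have hsup : p.support = (p.takeUntil _ h).support ++ (p.dropUntil _ h).support.tail := by
    rw [← Walk.support_append, hspec]
  have hlen : (p.takeUntil _ h).length + (p.dropUntil _ h).length = p.length := by
    rw [← Walk.length_append, hspec]
  set T := p.takeUntil _ h with hT
  have hTle : T.length ≤ p.length := by omega
  -- T.length = j
  have hst : p.support[T.length]? = some (T.getVert T.length) := by
    rw [hsup, List.getElem?_append_left (by rw [Walk.length_support]; omega)]
    exact support_getElem? T le_rfl
  have : p.getVert T.length = p.getVert j := by
    have := support_getElem? p hTle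
    rw [this] at hst
    rw [Option.some_injective _ hst, T.getVert_length]
  have hTlen : T.length = j := getVert_injOn hp hTle hj this
  rw [hsup, show j + 1 = T.support.length by rw [Walk.length_support, hTlen], List.take_left]

lemma support_dropUntil_eq [DecidableEq V] {u v : V} {p : G.Walk u v} (hp : p.IsPath) {j : ℕ}
    (hj : j ≤ p.length) (h : p.getVert j ∈ p.support) :
    (p.dropUntil _ h).support = p.support.drop j := by
  have hspec := p.take_spec h
  have hsup : p.support = (p.takeUntil _ h).support ++ (p.dropUntil _ h).support.tail := by
    rw [← Walk.support_append, hspec]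
  have htake := support_takeUntil_eq hp hj h
  have hlen : (p.takeUntil _ h).support.length = j + 1 := by
    rw [htake, List.length_take, Walk.length_support]; omega
  have htail : (p.dropUntil _ h).support.tail = p.support.drop (j + 1) := by
    conv_rhs => rw [hsup]
    rw [← hlen, List.drop_left]
  have hdrop : p.support.drop j = p.getVert j :: p.support.drop (j + 1) := by
    have hjlt : j < p.support.length := by rw [Walk.length_support]; omega
    rw [List.drop_eq_getElem_cons hjlt]
    congr 1
    have := support_getElem? p hj
    rw [List.getElem?_eq_getElem hjlt] at this
    exact Option.some_injective _ this
  rw [hdrop, ← htail, ← Walk.support_eq_cons]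

variable {v0 w0 : V} {p0 : G.Walk v0 w0}

/-- edge lists under a single rotation -/
lemma rotation_edges {v0 w y : V} {p : G.Walk v0 w} {q : G.Walk v0 y}
    (hrot : IsPosaRotation G p q) {e : Sym2 V}
    (he : e ∈ p.edges) (hq : e ∉ q.edges) :
    ∃ i, i + 1 < p.length ∧ e = s(p.getVert i, p.getVert (i + 1)) ∧ y = p.getVert (i + 1) := by
  obtain ⟨i, hi, hadj, hy, hsup⟩ := hrot
  have hllen : p.support.length = p.length + 1 := Walk.length_support p
  have hAlen : (p.support.take (i + 1)).length = i + 1 := by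
    rw [List.length_take]; omega
  have hAne : p.support.take (i + 1) ≠ [] := by
    rw [← List.length_pos_iff_ne_nil, hAlen]; omega
  have hBne : p.support.drop (i + 1) ≠ [] := by
    rw [← List.length_pos_iff_ne_nil, List.length_drop]; omega
  have hBrne : (p.support.drop (i + 1)).reverse ≠ [] := by simpa using hBne
  have hAl : ∀ h, (p.support.take (i + 1)).getLast h = p.getVert i := by
    intro h
    apply Option.some_injective V
    rw [← List.getLast?_eq_getLast h, List.getLast?_eq_getElem?, hAlen, Nat.add_sub_cancel,
      List.getElem?_take, if_pos (Nat.lt_succ_self i), support_getElem? p (by omega)]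
  have hBh : ∀ h, (p.support.drop (i + 1)).head h = p.getVert (i + 1) := by
    intro h
    apply Option.some_injective V
    rw [← List.head?_eq_head h, List.head?_drop, support_getElem? p (by omega)]
  have hBrh : ∀ h, (p.support.drop (i + 1)).reverse.head h = w := by
    intro h
    apply Option.some_injective V
    rw [← List.head?_eq_head h, List.head?_reverse, List.getLast?_eq_getElem?,
      List.getElem?_drop, List.length_drop,
      show i + 1 + (p.support.length - (i + 1) - 1) = p.length by omega,
      support_getElem? p le_rfl, Walk.getVert_length]
  have hpe : p.edges = zipE (p.support.take (i + 1)) ++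
      s(p.getVert i, p.getVert (i + 1)) :: zipE (p.support.drop (i + 1)) := by
    conv_lhs => rw [edges_eq_zipE, ← List.take_append_drop (i + 1) p.support]
    rw [zipE_split _ _ hAne hBne, hAl, hBh]
  have hqe : q.edges = zipE (p.support.take (i + 1)) ++
      s(p.getVert i, w) :: zipE (p.support.drop (i + 1)).reverse := by
    rw [edges_eq_zipE, hsup, zipE_split _ _ hAne hBrne, hAl, hBrh]
  rw [hpe] at he
  rcases List.mem_append.1 he with hin | hin
  · exact absurd (by rw [hqe]; exact List.mem_append_left _ hin) hq
  rcases List.mem_cons.1 hin with rfl | hin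
  · exact ⟨i, hi, rfl, hy⟩
  · exact absurd (by
      rw [hqe]
      exact List.mem_append_right _ (List.mem_cons_of_mem _ (mem_zipE_reverse.2 hin))) hq

variable {v0 w0 : V} {p0 : G.Walk v0 w0}

lemma support_perm {w : V} {q : G.Walk v0 w} (h : PosaReachable G p0 q) :
    q.support.Perm p0.support := by
  induction h with
  | base => exact List.Perm.refl _
  | rot p q hre hrot ih =>
    obtain ⟨i, hi, hadj, hy, hsup⟩ := hrot
    refine List.Perm.trans ?_ ih
    rw [hsup]
    conv_rhs => rw [← List.take_append_drop (i+1) p.support]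
    exact List.Perm.append_left _ (List.reverse_perm _)

lemma reachable_isPath (hp0 : p0.IsPath) {w : V} {q : G.Walk v0 w}
    (h : PosaReachable G p0 q) : q.IsPath := by
  rw [Walk.isPath_def]
  exact (support_perm h).nodup_iff.2 (hp0.support_nodup)

lemma reachable_length {w : V} {q : G.Walk v0 w} (h : PosaReachable G p0 q) :
    q.length = p0.length := by
  have := (support_perm h).length_eq
  rw [Walk.length_support, Walk.length_support] at this
  omega

lemma edge_invariant (hp0 : p0.IsPath) {w : V} {q : G.Walk v0 w}
    (h : PosaReachable G p0 q) {e : Sym2 V} (he : e ∈ p0.edges) (hq : e ∉ q.edges) :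
    ∃ x ∈ posaEnd G p0, x ∈ e := by
  induction h with
  | base => exact absurd he hq
  | rot p q hre hrot ih =>
    by_cases hep : e ∈ p.edges
    · obtain ⟨i, hi, hei, hy⟩ := rotation_edges hrot hep hq
      subst hy
      refine ⟨p.getVert (i + 1), ⟨?_, q, PosaReachable.rot p q hre hrot⟩, ?_⟩
      · have hppath := reachable_isPath hp0 hre
        intro h0
        have : p.getVert (i + 1) = p.getVert 0 := by rw [h0, Walk.getVert_zero]
        have := getVert_injOn hppath (by omega) (by omega) this
        omega
      · rw [hei]; simp
    · exact ih hep

lemma exists_rotation [DecidableEq V] {u : V} (Q : G.Walk v0 u) (hQ : Q.IsPath) (i : ℕ)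
    (hi : i + 1 < Q.length) (hadj : G.Adj (Q.getVert i) u) :
    ∃ q' : G.Walk v0 (Q.getVert (i + 1)), IsPosaRotation G Q q' := by
  have hv : Q.getVert i ∈ Q.support := by
    have := support_getElem? Q (i := i) (by omega)
    exact List.mem_of_getElem? this
  have hx : Q.getVert (i + 1) ∈ Q.support := by
    have := support_getElem? Q (i := i + 1) (by omega)
    exact List.mem_of_getElem? this
  refine ⟨((Q.takeUntil _ hv).concat hadj).append (Q.dropUntil _ hx).reverse,
    ⟨i, hi, hadj, rfl, ?_⟩⟩
  rw [Walk.support_append, Walk.support_concat, Walk.support_reverse,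
    support_takeUntil_eq hQ (by omega) hv, support_dropUntil_eq hQ (by omega) hx]
  have hcons : ((Q.support.drop (i + 1)).reverse) =
      u :: ((Q.support.drop (i + 1)).reverse).tail := by
    have h2 := (Q.dropUntil _ hx).reverse.support_eq_cons
    rw [Walk.support_reverse, support_dropUntil_eq hQ (by omega) hx] at h2
    exact h2
  conv_rhs => rw [hcons]
  simp [List.concat_eq_append]

lemma mem_edges_of_idx {a b : V} (p : G.Walk a b) {j : ℕ} (h : j + 1 ≤ p.length) :
    s(p.getVert j, p.getVert (j + 1)) ∈ p.edges := by
  rw [edges_eq_zipE, mem_zipE]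
  exact ⟨_, _, pair_infix_iff.2 ⟨j, support_getElem? _ (by omega), support_getElem? _ h⟩, rfl⟩

lemma idx_of_mem_support {a b x : V} {p : G.Walk a b} (h : x ∈ p.support) :
    ∃ j, j ≤ p.length ∧ p.getVert j = x := by
  obtain ⟨n, hn⟩ := List.getElem?_of_mem h
  have hlt := (List.getElem?_eq_some_iff.1 hn).1
  rw [Walk.length_support] at hlt
  refine ⟨n, by omega, ?_⟩
  exact Option.some_injective _ ((support_getElem? p (by omega)).symm.trans hn)

lemma claim [DecidableEq V] (hp0 : p0.IsPath) (hlen : 0 < p0.length)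
    (hmax : ∀ (x y : V) (q : G.Walk x y), q.IsPath → q.length ≤ p0.length)
    {v : V} (hv : v ∈ extNbhd G (posaEnd G p0)) :
    ∃ x ∈ posaEnd G p0, s(x, v) ∈ p0.edges := by
  obtain ⟨hvU, u, huU, hadj⟩ := hv
  obtain ⟨hu0, Q, hre⟩ := huU
  have huU : u ∈ posaEnd G p0 := ⟨hu0, Q, hre⟩
  have hQpath := reachable_isPath hp0 hre
  have hQlen := reachable_length hre
  have hperm := support_perm hre
  -- v is on Q
  have hvQ : v ∈ Q.support := by
    by_contra hvQ
    have hW : (Q.concat hadj).IsPath := isPath_concat hQpath hadj hvQ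
    have := hmax _ _ (Q.concat hadj) hW
    rw [Walk.length_concat] at this
    omega
  obtain ⟨i, hile, hQv⟩ := idx_of_mem_support hvQ
  have hilt : i < Q.length := by
    rcases Nat.lt_or_ge i Q.length with h | h
    · exact h
    · exfalso
      have : i = Q.length := by omega
      rw [this, Walk.getVert_length] at hQv
      exact hvU (hQv ▸ huU)
  -- the successor of v on Q is in the end-set
  have hxU : Q.getVert (i + 1) ∈ posaEnd G p0 := by
    rcases Nat.lt_or_ge (i + 1) Q.length with h | h
    · obtain ⟨q', hrot⟩ := exists_rotation Q hQpath i h (by rw [hQv]; exact hadj.symm)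
      refine ⟨?_, q', PosaReachable.rot Q q' hre hrot⟩
      intro h0
      have : Q.getVert (i + 1) = Q.getVert 0 := by rw [h0, Walk.getVert_zero]
      have := getVert_injOn hQpath (by omega) (by omega) this
      omega
    · have : i + 1 = Q.length := by omega
      rw [this, Walk.getVert_length]
      exact huU
  by_contra hcon
  push_neg at hcon
  -- every p0-edge at v survives in Q
  have hQe : ∀ e ∈ p0.edges, v ∈ e → e ∈ Q.edges := by
    intro e he hve
    by_contra hq
    obtain ⟨x, hxU', hxe⟩ := edge_invariant hp0 hre he hq
    have hxv : x ≠ v := fun h => hvU (h ▸ hxU')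
    have : e = s(x, v) := by
      induction e with
      | h a b =>
        rw [Sym2.mem_iff] at hve hxe
        rcases hxe with rfl | rfl
        · rcases hve with rfl | rfl
          · exact absurd rfl hxv
          · rfl
        · rcases hve with rfl | rfl
          · exact Sym2.eq_swap
          · exact absurd rfl hxv
    exact (hcon x hxU') (this ▸ he)
  -- Q-edges at v have a constrained form
  have hform : ∀ e ∈ Q.edges, v ∈ e →
      (0 < i ∧ e = s(Q.getVert (i - 1), v)) ∨ e = s(v, Q.getVert (i + 1)) := by
    intro e he hve
    rw [edges_eq_zipE, mem_zipE] at he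
    obtain ⟨a, b, hinf, rfl⟩ := he
    obtain ⟨n, hna, hnb⟩ := pair_infix_iff.1 hinf
    have hn1 : n + 1 < Q.support.length := (List.getElem?_eq_some_iff.1 hnb).1
    rw [Walk.length_support] at hn1
    have ha : a = Q.getVert n := by
      have := support_getElem? Q (i := n) (by omega)
      rw [hna] at this; exact Option.some_injective _ this
    have hb : b = Q.getVert (n + 1) := by
      have := support_getElem? Q (i := n + 1) (by omega)
      rw [hnb] at this; exact Option.some_injective _ this
    rw [Sym2.mem_iff] at hve
    rcases hve with rfl | rfl
    · right
      have : n = i := getVert_injOn hQpath (by omega) (by omega) (by rw [← ha, hQv])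
      rw [hb, this]
    · left
      have : n + 1 = i := getVert_injOn hQpath (by omega) (by omega) (by rw [← hb, hQv])
      constructor
      · omega
      · rw [ha, show i - 1 = n by omega, Sym2.eq_swap]
  -- position of v on p0
  have hvP : v ∈ p0.support := hperm.subset hvQ
  obtain ⟨j, hjle, hPv⟩ := idx_of_mem_support hvP
  have hjlt : j < p0.length := by
    rcases Nat.lt_or_ge j p0.length with h | h
    · exact h
    · exfalso
      have : j = p0.length := by omega
      rw [this, Walk.getVert_length] at hPv
      have hw0U : w0 ∈ posaEnd G p0 := by
        refine ⟨?_, p0, PosaReachable.base⟩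
        intro h0
        have : p0.getVert p0.length = p0.getVert 0 := by
          rw [Walk.getVert_zero, Walk.getVert_length, h0]
        have := getVert_injOn hp0 le_rfl (by omega) this
        omega
      exact hvU (hPv ▸ hw0U)
  -- the two p0-edges at v
  have he2 : s(v, p0.getVert (j + 1)) ∈ p0.edges := by
    have := mem_edges_of_idx p0 (j := j) (by omega)
    rwa [hPv] at this
  have he2Q := hQe _ he2 (by simp)
  have hsucc_ne : p0.getVert (j + 1) ≠ v := by
    intro h
    rw [← hPv] at h
    have := getVert_injOn hp0 (by omega) (by omega) h
    omega
  rcases Nat.eq_zero_or_pos j with rfl | hj0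
  · -- v = v0
    have hi0 : i = 0 := by
      apply getVert_injOn hQpath (by omega) (by omega)
      rw [hQv, Walk.getVert_zero, ← hPv, Walk.getVert_zero]
    rcases hform _ he2Q (by simp) with ⟨h0, _⟩ | heq
    · omega
    · have : p0.getVert 1 = Q.getVert (i + 1) := by
        have := Sym2.eq_iff.1 heq
        rcases this with ⟨_, h⟩ | ⟨h1, h2⟩
        · exact h
        · exact absurd h2 hsucc_ne
      refine hcon (p0.getVert (0 + 1)) (this ▸ hxU) ?_ |>.elim
      rw [Sym2.eq_swap] at he2
      exact he2
  · -- interior vertex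
    have he1 : s(p0.getVert (j - 1), v) ∈ p0.edges := by
      have := mem_edges_of_idx p0 (j := j - 1) (by omega)
      rwa [show j - 1 + 1 = j by omega, hPv] at this
    have he1Q := hQe _ he1 (by simp)
    have hpred_ne : p0.getVert (j - 1) ≠ v := by
      intro h
      rw [← hPv] at h
      have := getVert_injOn hp0 (by omega) (by omega) h
      omega
    have hpred_ne_succ : p0.getVert (j - 1) ≠ p0.getVert (j + 1) := by
      intro h
      have := getVert_injOn hp0 (by omega) (by omega) h
      omega
    rcases hform _ he1Q (by simp) with ⟨hi1, heq1⟩ | heq1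
    · rcases hform _ he2Q (by simp) with ⟨_, heq2⟩ | heq2
      · -- both are the predecessor edge: contradiction
        have hcomb := heq1.trans heq2.symm
        rcases Sym2.eq_iff.1 hcomb with ⟨h1, h2⟩ | ⟨h1, h2⟩
        · exact absurd h1 hpred_ne
        · exact absurd h1 hpred_ne_succ
      · -- e2 is the successor edge
        have : p0.getVert (j + 1) = Q.getVert (i + 1) := by
          rcases Sym2.eq_iff.1 heq2 with ⟨h1, h2⟩ | ⟨h1, h2⟩
          · exact h2
          · exact absurd h2 hsucc_ne
        refine hcon (p0.getVert (j + 1)) (this ▸ hxU) ?_ |>.elim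
        rw [Sym2.eq_swap] at he2
        exact he2
    · -- e1 is the successor edge
      have : p0.getVert (j - 1) = Q.getVert (i + 1) := by
        rcases Sym2.eq_iff.1 heq1 with ⟨h1, h2⟩ | ⟨h1, h2⟩
        · exact absurd h1 hpred_ne
        · exact h1
      exact hcon (p0.getVert (j - 1)) (this ▸ hxU) he1 |>.elim

theorem main [Fintype V] [DecidableEq V]
    (hp0 : p0.IsPath) (hlen : 0 < p0.length)
    (hmax : ∀ (x y : V) (q : G.Walk x y), q.IsPath → q.length ≤ p0.length) :
    (extNbhd G (posaEnd G p0)).ncard < 2 * (posaEnd G p0).ncard := by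
  have hnd : p0.support.Nodup := hp0.support_nodup
  have hllen : p0.support.length = p0.length + 1 := Walk.length_support p0
  have hidx : ∀ {n : ℕ} {x : V}, p0.support[n]? = some x → p0.support.idxOf x = n := by
    intro n x hn
    have hmem : x ∈ p0.support := List.mem_of_getElem? hn
    refine (List.getElem?_inj (List.idxOf_lt_length_iff.2 hmem) hnd).1 ?_
    rw [List.getElem?_idxOf hmem, hn]
  set succ : V → V := fun s => p0.support.getD (p0.support.idxOf s + 1) s with hsucc
  set pred : V → V := fun s => p0.support.getD (p0.support.idxOf s - 1) s with hpred
  have hw0U : w0 ∈ posaEnd G p0 := by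
    refine ⟨?_, p0, PosaReachable.base⟩
    intro h0
    have : p0.getVert p0.length = p0.getVert 0 := by
      rw [Walk.getVert_zero, Walk.getVert_length, h0]
    have := getVert_injOn hp0 le_rfl (by omega) this
    omega
  have hsub : extNbhd G (posaEnd G p0) ⊆
      ((succ '' posaEnd G p0) \ {w0}) ∪ pred '' posaEnd G p0 := by
    intro v hv
    have hvU : v ∉ posaEnd G p0 := hv.1
    obtain ⟨x, hxU, hE⟩ := claim hp0 hlen hmax hv
    rw [edges_eq_zipE, mem_zipE] at hE
    obtain ⟨a, b, hinf, heq⟩ := hE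
    obtain ⟨n, hna, hnb⟩ := pair_infix_iff.1 hinf
    rcases Sym2.eq_iff.1 heq with ⟨rfl, rfl⟩ | ⟨rfl, rfl⟩
    · left
      refine ⟨⟨x, hxU, ?_⟩, ?_⟩
      · rw [hsucc]; simp only
        rw [hidx hna, List.getD_eq_getElem?_getD, hnb]; rfl
      · simp only [Set.mem_singleton_iff]
        intro h; exact hvU (h ▸ hw0U)
    · right
      refine ⟨x, hxU, ?_⟩
      rw [hpred]; simp only
      rw [hidx hnb, Nat.add_sub_cancel, List.getD_eq_getElem?_getD, hna]; rfl
  have hsw0 : succ w0 = w0 := by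
    have hw0n : p0.support[p0.length]? = some w0 := by
      have := support_getElem? p0 le_rfl
      rwa [Walk.getVert_length] at this
    rw [hsucc]; simp only
    rw [hidx hw0n, List.getD_eq_getElem?_getD, List.getElem?_eq_none (by omega)]; rfl
  have h1 := Set.ncard_le_ncard hsub (Set.toFinite _)
  have h2 := Set.ncard_union_le ((succ '' posaEnd G p0) \ {w0}) (pred '' posaEnd G p0)
  have h3 : ((succ '' posaEnd G p0) \ {w0}).ncard < (succ '' posaEnd G p0).ncard :=
    Set.ncard_diff_singleton_lt_of_mem ⟨w0, hw0U, hsw0⟩ (Set.toFinite _)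
  have h4 : (succ '' posaEnd G p0).ncard ≤ (posaEnd G p0).ncard :=
    Set.ncard_image_le (Set.toFinite _)
  have h5 : (pred '' posaEnd G p0).ncard ≤ (posaEnd G p0).ncard :=
    Set.ncard_image_le (Set.toFinite _)
  omega

end PosaAux

/-- If `P` is a longest path in `G` with endpoint `v₀`, then the external neighbourhood of the
Pósa end-set `End(v₀)` has fewer than `2 |End(v₀)|` vertices. -/
theorem stmt_3 {V : Type*} [Fintype V] [DecidableEq V] (G : SimpleGraph V)
    (v0 w0 : V) (p0 : G.Walk v0 w0) (hp0 : p0.IsPath) (hlen : 0 < p0.length)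
    (hmax : ∀ (x y : V) (q : G.Walk x y), q.IsPath → q.length ≤ p0.length) :
    (extNbhd G (posaEnd G p0)).ncard < 2 * (posaEnd G p0).ncard :=
  PosaAux.main hp0 hlen hmax
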